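/- (Theorem 2, safety part.) Let x, y, θ, z : ℝ → ℝ be differentiable on [0, ∞) and suppose that at every t ≥ 0 with r(t) ∈ (r_i, r_o), the closed-loop equations hold: ẋ(t) = v·cos θ(t), ẏ(t) = v·sin θ(t), ż(t) = −κ·z(t) + (1/2)·r(t)², θ̇(t) = v/d + v·k₁·Ω(β(t)) + v·k₂·((r(t) − d)/r(t))·η(r(t) − d), where β(t) = −κ·z(t) + (1/2)·r(t)². If r(0) ∈ (r_i, r_o), then r_i < r(t) < r_o for all t ≥ 0. -/

import Mathlib

/-- Range r(t) = √((x(t) − x_T)² + (y(t) − y_T)²). -/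
noncomputable def rng (x y : ℝ → ℝ) (xT yT : ℝ) (t : ℝ) : ℝ :=
  Real.sqrt ((x t - xT) ^ 2 + (y t - yT) ^ 2)

/-- Transformed error ē_x(t) = (x(t) − x_T)·cos θ(t) + (y(t) − y_T)·sin θ(t). -/
noncomputable def ebx (x y θ : ℝ → ℝ) (xT yT : ℝ) (t : ℝ) : ℝ :=
  (x t - xT) * Real.cos (θ t) + (y t - yT) * Real.sin (θ t)

/-- Transformed error ē_y(t) = −(x(t) − x_T)·sin θ(t) + (y(t) − y_T)·cos θ(t) + d. -/
noncomputable def eby (x y θ : ℝ → ℝ) (xT yT d : ℝ) (t : ℝ) : ℝ :=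
  -(x t - xT) * Real.sin (θ t) + (y t - yT) * Real.cos (θ t) + d

/-- The asymmetric barrier Lyapunov function V_r. -/
noncomputable def Vr (δa δb e : ℝ) : ℝ :=
  if 0 < e then (1 / 2) * Real.log (δb ^ 2 / (δb ^ 2 - e ^ 2))
  else (1 / 2) * Real.log (δa ^ 2 / (δa ^ 2 - e ^ 2))

/-- η(e) = 1/(δ_b² − e²) for e > 0 and η(e) = 1/(δ_a² − e²) for e ≤ 0. -/
noncomputable def eta (δa δb e : ℝ) : ℝ :=
  if 0 < e then 1 / (δb ^ 2 - e ^ 2) else 1 / (δa ^ 2 - e ^ 2)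

/-- The estimation signal β(t) = −κ·z(t) + (1/2)·r(t)². -/
noncomputable def beta (x y : ℝ → ℝ) (z : ℝ → ℝ) (κ xT yT : ℝ) (t : ℝ) : ℝ :=
  -κ * z t + (1 / 2) * (rng x y xT yT t) ^ 2


/-! ### Auxiliary lemmas -/

lemma hasDerivAt_branch {δ : ℝ} (hδ : 0 < δ) {e : ℝ} (he : e ^ 2 < δ ^ 2) :
    HasDerivAt (fun s : ℝ => (1/2 : ℝ) * Real.log (δ ^ 2 / (δ ^ 2 - s ^ 2)))
      (e / (δ ^ 2 - e ^ 2)) e := by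
  have hpos : 0 < δ ^ 2 - e ^ 2 := by linarith
  have hinner : HasDerivAt (fun s : ℝ => δ ^ 2 - s ^ 2) (-(2 * e)) e := by
    simpa using ((hasDerivAt_pow 2 e).const_sub (δ ^ 2))
  have hlog : HasDerivAt (fun s : ℝ => Real.log (δ ^ 2 - s ^ 2)) (-(2 * e) / (δ ^ 2 - e ^ 2)) e :=
    hinner.log (ne_of_gt hpos)
  have hg : HasDerivAt (fun s : ℝ => (1/2 : ℝ) * (Real.log (δ ^ 2) - Real.log (δ ^ 2 - s ^ 2)))
      (e / (δ ^ 2 - e ^ 2)) e := by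
    have := (hlog.const_sub (Real.log (δ ^ 2))).const_mul (1/2 : ℝ)
    refine this.congr_deriv ?_
    ring
  apply hg.congr_of_eventuallyEq
  have hU : {s : ℝ | 0 < δ ^ 2 - s ^ 2} ∈ nhds e := by
    have : IsOpen {s : ℝ | 0 < δ ^ 2 - s ^ 2} :=
      isOpen_lt continuous_const (by continuity)
    exact this.mem_nhds hpos
  filter_upwards [hU] with s hs
  rw [Real.log_div (by positivity) (ne_of_gt hs)]

lemma hasDerivAt_Vr {δa δb : ℝ} (ha : 0 < δa) (hb : 0 < δb) {e : ℝ}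
    (h1 : -δa < e) (h2 : e < δb) :
    HasDerivAt (Vr δa δb) (e * eta δa δb e) e := by
  rcases lt_trichotomy 0 e with hpos | hzero | hneg
  · have hsq : e ^ 2 < δb ^ 2 := by nlinarith
    have h := hasDerivAt_branch hb hsq
    have heq : (fun s : ℝ => (1/2 : ℝ) * Real.log (δb ^ 2 / (δb ^ 2 - s ^ 2)))
        =ᶠ[nhds e] Vr δa δb := by
      filter_upwards [isOpen_Ioi.mem_nhds hpos] with s hs
      simp [Vr, if_pos (Set.mem_Ioi.mp hs)]
    rw [eta, if_pos hpos, mul_one_div]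
    exact h.congr_of_eventuallyEq heq.symm
  · subst hzero
    have hbb : HasDerivWithinAt (Vr δa δb) 0 (Set.Ici 0) 0 := by
      have h := (hasDerivAt_branch hb (by nlinarith : (0:ℝ) ^ 2 < δb ^ 2)).hasDerivWithinAt
        (s := Set.Ici 0)
      simp only [zero_div] at h
      apply h.congr
      · intro s hs
        rcases eq_or_lt_of_le (Set.mem_Ici.mp hs) with h0 | h0
        · simp [Vr, ← h0, div_self (by positivity : (δa:ℝ) ^ 2 ≠ 0),
            div_self (by positivity : (δb:ℝ) ^ 2 ≠ 0)]
        · simp [Vr, if_pos h0]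
      · simp [Vr, div_self (by positivity : (δa:ℝ) ^ 2 ≠ 0),
          div_self (by positivity : (δb:ℝ) ^ 2 ≠ 0)]
    have haa : HasDerivWithinAt (Vr δa δb) 0 (Set.Iic 0) 0 := by
      have h := (hasDerivAt_branch ha (by nlinarith : (0:ℝ) ^ 2 < δa ^ 2)).hasDerivWithinAt
        (s := Set.Iic 0)
      simp only [zero_div] at h
      apply h.congr
      · intro s hs
        simp [Vr, if_neg (not_lt.mpr (Set.mem_Iic.mp hs))]
      · simp [Vr]
    have h := haa.union hbb
    rw [Set.Iic_union_Ici, hasDerivWithinAt_univ] at h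
    simpa using h
  · have hsq : e ^ 2 < δa ^ 2 := by nlinarith
    have h := hasDerivAt_branch ha hsq
    have heq : (fun s : ℝ => (1/2 : ℝ) * Real.log (δa ^ 2 / (δa ^ 2 - s ^ 2)))
        =ᶠ[nhds e] Vr δa δb := by
      filter_upwards [isOpen_Iio.mem_nhds hneg] with s hs
      simp [Vr, if_neg (not_lt.mpr (le_of_lt (Set.mem_Iio.mp hs)))]
    rw [eta, if_neg (not_lt.mpr (le_of_lt hneg)), mul_one_div]
    exact h.congr_of_eventuallyEq heq.symm

lemma Vr_extract {δ e M : ℝ} (hδ : 0 < δ) (he : e ^ 2 < δ ^ 2)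
    (h : (1/2 : ℝ) * Real.log (δ ^ 2 / (δ ^ 2 - e ^ 2)) ≤ M) :
    e ^ 2 ≤ δ ^ 2 * (1 - Real.exp (-(2 * M))) := by
  have hpos : 0 < δ ^ 2 - e ^ 2 := by linarith
  have h2 : Real.log (δ ^ 2 / (δ ^ 2 - e ^ 2)) ≤ 2 * M := by linarith
  have hq : 0 < δ ^ 2 / (δ ^ 2 - e ^ 2) := by positivity
  have h3 : δ ^ 2 / (δ ^ 2 - e ^ 2) ≤ Real.exp (2 * M) := by
    calc δ ^ 2 / (δ ^ 2 - e ^ 2) = Real.exp (Real.log (δ ^ 2 / (δ ^ 2 - e ^ 2))) :=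
          (Real.exp_log hq).symm
      _ ≤ Real.exp (2 * M) := Real.exp_le_exp.mpr h2
  have hE : 0 < Real.exp (2 * M) := Real.exp_pos _
  have hEneg : Real.exp (-(2 * M)) = 1 / Real.exp (2 * M) := by
    rw [Real.exp_neg]; exact inv_eq_one_div _
  rw [div_le_iff₀ hpos] at h3
  rw [hEneg]
  have h4 : δ ^ 2 * (1 - 1 / Real.exp (2 * M)) = δ ^ 2 - δ ^ 2 / Real.exp (2 * M) := by ring
  rw [h4]
  have h5 : δ ^ 2 / Real.exp (2 * M) ≤ δ ^ 2 - e ^ 2 :=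
    (div_le_iff₀ hE).mpr (by nlinarith)
  linarith

set_option maxHeartbeats 2000000 in
/-- Theorem 2, safety part: Under the closed-loop dynamics with the
range-only dynamic output feedback controller, if r(0) ∈ (r_i, r_o), then
r_i < r(t) < r_o for all t ≥ 0. -/
theorem theorem2_safety
    (x y θ z : ℝ → ℝ) (Ω α₁ α₂ : ℝ → ℝ) (v d k1 k2 κ ri ro xT yT : ℝ)
    (hΩcont : Continuous Ω) (hΩ0 : Ω 0 = 0) (hΩpos : ∀ s : ℝ, s ≠ 0 → 0 < s * Ω s)
    (hα₁mono : StrictMonoOn α₁ (Set.Ici 0)) (hα₁cont : ContinuousOn α₁ (Set.Ici 0))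
    (hα₁0 : α₁ 0 = 0) (hα₁top : Filter.Tendsto α₁ Filter.atTop Filter.atTop)
    (hα₂mono : StrictMonoOn α₂ (Set.Ici 0)) (hα₂cont : ContinuousOn α₂ (Set.Ici 0))
    (hα₂0 : α₂ 0 = 0) (hα₂top : Filter.Tendsto α₂ Filter.atTop Filter.atTop)
    (hΩbounds : ∀ s : ℝ, α₁ |s| ≤ (∫ τ in (0 : ℝ)..s, Ω τ) ∧
      (∫ τ in (0 : ℝ)..s, Ω τ) ≤ α₂ |s|)
    (hv : v ≠ 0) (hri : 0 < ri) (hrid : ri < d) (hdro : d < ro)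
    (hk1 : 0 < k1) (hk2 : 0 < k2) (hκ : 0 < κ)
    (hxdiff : ∀ t ≥ (0 : ℝ), DifferentiableAt ℝ x t)
    (hydiff : ∀ t ≥ (0 : ℝ), DifferentiableAt ℝ y t)
    (hθdiff : ∀ t ≥ (0 : ℝ), DifferentiableAt ℝ θ t)
    (hzdiff : ∀ t ≥ (0 : ℝ), DifferentiableAt ℝ z t)
    (hclosedloop : ∀ t ≥ (0 : ℝ), rng x y xT yT t ∈ Set.Ioo ri ro →
      HasDerivAt x (v * Real.cos (θ t)) t ∧
      HasDerivAt y (v * Real.sin (θ t)) t ∧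
      HasDerivAt z (-κ * z t + (1 / 2) * (rng x y xT yT t) ^ 2) t ∧
      HasDerivAt θ (v / d + v * k1 * Ω (beta x y z κ xT yT t) +
        v * k2 * ((rng x y xT yT t - d) / rng x y xT yT t) *
          eta (d - ri) (ro - d) (rng x y xT yT t - d)) t)
    (hr0 : rng x y xT yT 0 ∈ Set.Ioo ri ro) :
    ∀ t ≥ (0 : ℝ), ri < rng x y xT yT t ∧ rng x y xT yT t < ro := by
  have hd : 0 < d := lt_trans hri hrid
  have hro0 : 0 < ro := lt_trans hd hdro
  have hδa : 0 < d - ri := by linarith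
  have hδb : 0 < ro - d := by linarith
  -- continuity of rng and beta at t ≥ 0
  have hrcont : ∀ t : ℝ, 0 ≤ t → ContinuousAt (rng x y xT yT) t := by
    intro t ht
    show ContinuousAt (fun s => Real.sqrt ((x s - xT) ^ 2 + (y s - yT) ^ 2)) t
    exact Real.continuous_sqrt.continuousAt.comp
      ((((hxdiff t ht).continuousAt.sub continuousAt_const).pow 2).add
        (((hydiff t ht).continuousAt.sub continuousAt_const).pow 2))
  have hβcont : ∀ t : ℝ, 0 ≤ t → ContinuousAt (beta x y z κ xT yT) t := by
    intro t ht
    show ContinuousAt (fun s => -κ * z s + (1 / 2) * (rng x y xT yT s) ^ 2) t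
    exact ((hzdiff t ht).continuousAt.const_mul (-κ)).add
      (((hrcont t ht).pow 2).const_mul (1 / 2))
  -- bounds from the rotation identity
  have hebx_le : ∀ t : ℝ, |ebx x y θ xT yT t| ≤ rng x y xT yT t := by
    intro t
    have hsq : (ebx x y θ xT yT t) ^ 2 ≤ (x t - xT) ^ 2 + (y t - yT) ^ 2 := by
      simp only [ebx]
      nlinarith [Real.sin_sq_add_cos_sq (θ t),
        sq_nonneg ((x t - xT) * Real.sin (θ t) - (y t - yT) * Real.cos (θ t))]
    calc |ebx x y θ xT yT t| = Real.sqrt ((ebx x y θ xT yT t) ^ 2) :=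
          (Real.sqrt_sq_eq_abs _).symm
      _ ≤ rng x y xT yT t := Real.sqrt_le_sqrt hsq
  have heby_le : ∀ t : ℝ, |eby x y θ xT yT d t - d| ≤ rng x y xT yT t := by
    intro t
    have hsq : (eby x y θ xT yT d t - d) ^ 2 ≤ (x t - xT) ^ 2 + (y t - yT) ^ 2 := by
      simp only [eby]
      nlinarith [Real.sin_sq_add_cos_sq (θ t),
        sq_nonneg ((x t - xT) * Real.cos (θ t) + (y t - yT) * Real.sin (θ t))]
    calc |eby x y θ xT yT d t - d| = Real.sqrt ((eby x y θ xT yT d t - d) ^ 2) :=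
          (Real.sqrt_sq_eq_abs _).symm
      _ ≤ rng x y xT yT t := Real.sqrt_le_sqrt hsq
  -- set up the contradiction via the first exit time
  by_contra hbad
  push_neg at hbad
  obtain ⟨t₀, ht₀0, ht₀⟩ := hbad
  set B : Set ℝ := {t : ℝ | 0 ≤ t ∧ rng x y xT yT t ∉ Set.Ioo ri ro} with hBdef
  have hBne : B.Nonempty := by
    refine ⟨t₀, ht₀0, ?_⟩
    simp only [Set.mem_Ioo, not_and, not_lt]
    exact ht₀
  have hBclosed : IsClosed B := by
    have hrOn : ContinuousOn (rng x y xT yT) (Set.Ici 0) :=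
      fun s hs => (hrcont s hs).continuousWithinAt
    have : B = Set.Ici 0 ∩ rng x y xT yT ⁻¹' (Set.Ioo ri ro)ᶜ := by
      ext s; simp [hBdef, Set.mem_Ici]
    rw [this]
    exact hrOn.preimage_isClosed_of_isClosed isClosed_Ici isOpen_Ioo.isClosed_compl
  have hBbdd : BddBelow B := ⟨0, fun s hs => hs.1⟩
  set T := sInf B with hTdef
  have hTB : T ∈ B := hBclosed.csInf_mem hBne hBbdd
  have hT0 : 0 ≤ T := hTB.1
  have hTpos : 0 < T := by
    rcases eq_or_lt_of_le hT0 with h0 | h0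
    · exact absurd hr0 (by rw [← h0] at hTB; exact hTB.2)
    · exact h0
  have hin : ∀ t : ℝ, 0 ≤ t → t < T → rng x y xT yT t ∈ Set.Ioo ri ro := by
    intro t ht htT
    by_contra hc
    exact absurd (csInf_le hBbdd ⟨ht, hc⟩) (not_le.mpr htT)
  have hrpos : ∀ t : ℝ, 0 ≤ t → t < T → 0 < rng x y xT yT t :=
    fun t ht htT => lt_trans hri (hin t ht htT).1
  -- derivative of the squared distance
  have hq' : ∀ t : ℝ, 0 ≤ t → t < T →
      HasDerivAt (fun s => (x s - xT) ^ 2 + (y s - yT) ^ 2)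
        (2 * v * ebx x y θ xT yT t) t := by
    intro t ht htT
    obtain ⟨hx', hy', -, -⟩ := hclosedloop t ht (hin t ht htT)
    have h1 := ((hx'.sub_const xT).pow 2).add ((hy'.sub_const yT).pow 2)
    refine h1.congr_deriv ?_
    simp only [ebx]
    ring
  -- derivative of rng
  have hr' : ∀ t : ℝ, 0 ≤ t → t < T →
      HasDerivAt (rng x y xT yT) (v * ebx x y θ xT yT t / rng x y xT yT t) t := by
    intro t ht htT
    have hq0 : (x t - xT) ^ 2 + (y t - yT) ^ 2 ≠ 0 :=
      ne_of_gt (Real.sqrt_pos.mp (hrpos t ht htT))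
    have h := (hq' t ht htT).sqrt hq0
    have hR : rng x y xT yT t = Real.sqrt ((x t - xT) ^ 2 + (y t - yT) ^ 2) := rfl
    have hR0 : Real.sqrt ((x t - xT) ^ 2 + (y t - yT) ^ 2) ≠ 0 :=
      ne_of_gt (hrpos t ht htT)
    refine h.congr_deriv ?_
    rw [hR]
    field_simp
  -- derivative of beta
  have hβ' : ∀ t : ℝ, 0 ≤ t → t < T →
      HasDerivAt (beta x y z κ xT yT)
        (-κ * beta x y z κ xT yT t + v * ebx x y θ xT yT t) t := by
    intro t ht htT
    obtain ⟨-, -, hz', -⟩ := hclosedloop t ht (hin t ht htT)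
    have hfun : beta x y z κ xT yT
        = fun s => -κ * z s + (1 / 2) * ((x s - xT) ^ 2 + (y s - yT) ^ 2) := by
      funext s
      simp only [beta, rng]
      rw [Real.sq_sqrt (by positivity)]
    rw [hfun]
    have h := (hz'.const_mul (-κ)).add ((hq' t ht htT).const_mul (1 / 2))
    refine h.congr_deriv ?_
    simp only [beta]
    rw [show rng x y xT yT t ^ 2 = (x t - xT) ^ 2 + (y t - yT) ^ 2 from
      Real.sq_sqrt (by positivity)]
    ring
  -- derivative of the Lyapunov-like function V
  set V : ℝ → ℝ := fun s => Vr (d - ri) (ro - d) (rng x y xT yT s - d)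
      + (1 / k2) * eby x y θ xT yT d s with hVdef
  clear_value V
  have hV' : ∀ t : ℝ, 0 ≤ t → t < T →
      HasDerivAt V (-(v * ebx x y θ xT yT t / k2)
        * (1 / d + k1 * Ω (beta x y z κ xT yT t))) t := by
    intro t ht htT
    obtain ⟨hx', hy', -, hθ'⟩ := hclosedloop t ht (hin t ht htT)
    have hrin := hin t ht htT
    have he1 : -(d - ri) < rng x y xT yT t - d := by
      have := hrin.1; linarith
    have he2 : rng x y xT yT t - d < ro - d := by
      have := hrin.2; linarith
    have hVr : HasDerivAt (fun s => Vr (d - ri) (ro - d) (rng x y xT yT s - d))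
        (((rng x y xT yT t - d) * eta (d - ri) (ro - d) (rng x y xT yT t - d))
          * (v * ebx x y θ xT yT t / rng x y xT yT t)) t :=
      by have := (hasDerivAt_Vr hδa hδb he1 he2).comp t ((hr' t ht htT).sub_const d); exact this
    have heby' : HasDerivAt (eby x y θ xT yT d)
        (-(ebx x y θ xT yT t) * (v / d + v * k1 * Ω (beta x y z κ xT yT t) +
          v * k2 * ((rng x y xT yT t - d) / rng x y xT yT t) *
            eta (d - ri) (ro - d) (rng x y xT yT t - d))) t := by
      have h1 : HasDerivAt (fun s => Real.sin (θ s))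
          (Real.cos (θ t) * (v / d + v * k1 * Ω (beta x y z κ xT yT t) +
            v * k2 * ((rng x y xT yT t - d) / rng x y xT yT t) *
              eta (d - ri) (ro - d) (rng x y xT yT t - d))) t := hθ'.sin
      have h2 : HasDerivAt (fun s => Real.cos (θ s))
          (-Real.sin (θ t) * (v / d + v * k1 * Ω (beta x y z κ xT yT t) +
            v * k2 * ((rng x y xT yT t - d) / rng x y xT yT t) *
              eta (d - ri) (ro - d) (rng x y xT yT t - d))) t := hθ'.cos
      have h := ((((hx'.sub_const xT).neg.mul h1).add
        ((hy'.sub_const yT).mul h2)).add_const d)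
      refine h.congr_deriv ?_
      simp only [ebx, Pi.neg_apply]
      ring
    have h := hVr.add (heby'.const_mul (1 / k2))
    rw [hVdef]
    refine h.congr_deriv ?_
    have hR0 : rng x y xT yT t ≠ 0 := ne_of_gt (hrpos t ht htT)
    field_simp
    ring
  -- Grönwall bound for beta
  obtain ⟨BB, hBBdef⟩ : ∃ BB : ℝ, BB = gronwallBound ‖beta x y z κ xT yT 0‖ κ (|v| * ro) T :=
    ⟨_, rfl⟩
  have hβbound : ∀ t : ℝ, 0 ≤ t → t < T → |beta x y z κ xT yT t| ≤ BB := by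
    intro t ht htT
    have hgr := norm_le_gronwallBound_of_norm_deriv_right_le
      (f := beta x y z κ xT yT)
      (f' := fun s => -κ * beta x y z κ xT yT s + v * ebx x y θ xT yT s)
      (δ := ‖beta x y z κ xT yT 0‖) (K := κ) (ε := |v| * ro) (a := 0) (b := t)
      (fun s hs => (hβcont s hs.1).continuousWithinAt)
      (fun s hs => (hβ' s hs.1 (lt_trans hs.2 htT)).hasDerivWithinAt)
      le_rfl
      ?_ t ⟨ht, le_rfl⟩
    · have hmono : gronwallBound ‖beta x y z κ xT yT 0‖ κ (|v| * ro) (t - 0) ≤ BB := by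
        rw [hBBdef, gronwallBound_of_K_ne_0 (ne_of_gt hκ)]
        have hexp : Real.exp (κ * (t - 0)) ≤ Real.exp (κ * T) :=
          Real.exp_le_exp.mpr (by nlinarith)
        have h1 : (0:ℝ) ≤ ‖beta x y z κ xT yT 0‖ := norm_nonneg _
        have h2 : (0:ℝ) ≤ |v| * ro / κ := by positivity
        simp only []
        nlinarith [mul_nonneg (add_nonneg h1 h2) (sub_nonneg.mpr hexp)]
      calc |beta x y z κ xT yT t| = ‖beta x y z κ xT yT t‖ := rfl
        _ ≤ gronwallBound ‖beta x y z κ xT yT 0‖ κ (|v| * ro) (t - 0) := hgr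
        _ ≤ BB := hmono
    · intro s hs
      have hsT : s < T := lt_trans hs.2 htT
      have hrs := hin s hs.1 hsT
      calc ‖-κ * beta x y z κ xT yT s + v * ebx x y θ xT yT s‖
          ≤ ‖-κ * beta x y z κ xT yT s‖ + ‖v * ebx x y θ xT yT s‖ := norm_add_le _ _
        _ = κ * ‖beta x y z κ xT yT s‖ + |v| * |ebx x y θ xT yT s| := by
            rw [Real.norm_eq_abs, Real.norm_eq_abs, Real.norm_eq_abs, abs_mul, abs_mul,
              abs_neg, abs_of_pos hκ]
        _ ≤ κ * ‖beta x y z κ xT yT s‖ + |v| * ro := by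
            have := le_trans (hebx_le s) (le_of_lt hrs.2)
            have hv0 : (0:ℝ) ≤ |v| := abs_nonneg v
            nlinarith
  have hBB0 : 0 ≤ BB := le_trans (abs_nonneg _) (hβbound 0 le_rfl hTpos)
  -- bound for Ω along the trajectory
  obtain ⟨MΩ, hMΩ⟩ := (isCompact_Icc (a := -BB) (b := BB)).exists_bound_of_continuousOn
    hΩcont.continuousOn
  have hMΩ0 : 0 ≤ MΩ := le_trans (norm_nonneg _) (hMΩ 0 ⟨by linarith, hBB0⟩)
  obtain ⟨C, hCdef⟩ : ∃ C : ℝ, C = (|v| * ro / k2) * (1 / d + k1 * MΩ) := ⟨_, rfl⟩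
  have hC0 : 0 ≤ C := by
    rw [hCdef]; positivity
  have hDbound : ∀ t : ℝ, 0 ≤ t → t < T →
      |(-(v * ebx x y θ xT yT t / k2) * (1 / d + k1 * Ω (beta x y z κ xT yT t)))| ≤ C := by
    intro t ht htT
    have hrin := hin t ht htT
    have h1 : |v * ebx x y θ xT yT t| ≤ |v| * ro := by
      rw [abs_mul]
      have := le_trans (hebx_le t) (le_of_lt hrin.2)
      have hv0 : (0:ℝ) ≤ |v| := abs_nonneg v
      nlinarith
    have hβt := abs_le.mp (hβbound t ht htT)
    have hΩb : |Ω (beta x y z κ xT yT t)| ≤ MΩ :=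
      hMΩ _ (Set.mem_Icc.mpr hβt)
    have h2 : |1 / d + k1 * Ω (beta x y z κ xT yT t)| ≤ 1 / d + k1 * MΩ := by
      calc |1 / d + k1 * Ω (beta x y z κ xT yT t)|
          ≤ |1 / d| + |k1 * Ω (beta x y z κ xT yT t)| := abs_add_le _ _
        _ = 1 / d + k1 * |Ω (beta x y z κ xT yT t)| := by
            rw [abs_of_pos (by positivity : (0:ℝ) < 1 / d), abs_mul, abs_of_pos hk1]
        _ ≤ 1 / d + k1 * MΩ := by nlinarith
    calc |(-(v * ebx x y θ xT yT t / k2) * (1 / d + k1 * Ω (beta x y z κ xT yT t)))|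
        = (|v * ebx x y θ xT yT t| / k2) * |1 / d + k1 * Ω (beta x y z κ xT yT t)| := by
          rw [abs_mul, abs_neg, abs_div, abs_of_pos hk2]
      _ ≤ (|v| * ro / k2) * (1 / d + k1 * MΩ) := by
          have h3 : (0:ℝ) ≤ |v| * ro / k2 := by positivity
          have hc : |v * ebx x y θ xT yT t| / k2 ≤ |v| * ro / k2 := by gcongr
          exact mul_le_mul hc h2 (abs_nonneg _) h3
      _ = C := hCdef.symm

  -- Grönwall (K = 0) bound for V
  have hVbound : ∀ t : ℝ, 0 ≤ t → t < T → V t ≤ V 0 + C * T := by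
    intro t ht htT
    have hgr := norm_le_gronwallBound_of_norm_deriv_right_le
      (f := fun s => V s - V 0)
      (f' := fun s => -(v * ebx x y θ xT yT s / k2)
        * (1 / d + k1 * Ω (beta x y z κ xT yT s)))
      (δ := 0) (K := 0) (ε := C) (a := 0) (b := t)
      (fun s hs =>
        (((hV' s hs.1 (lt_of_le_of_lt hs.2 htT)).sub_const (V 0)).continuousAt).continuousWithinAt)
      (fun s hs => ((hV' s hs.1 (lt_trans hs.2 htT)).sub_const (V 0)).hasDerivWithinAt)
      (by simp)
      (fun s hs => by
        rw [zero_mul, zero_add]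
        exact hDbound s hs.1 (lt_trans hs.2 htT))
      t ⟨ht, le_rfl⟩
    simp only [gronwallBound_K0, zero_add, sub_zero] at hgr
    have h1 := (abs_le.mp hgr).2
    have h2 : C * t ≤ C * T := mul_le_mul_of_nonneg_left (le_of_lt htT) hC0
    linarith
  -- uniform bound on the barrier function along the trajectory
  obtain ⟨M, hMdef⟩ : ∃ M : ℝ, M = max 0 (V 0 + C * T + (ro - d) / k2) := ⟨_, rfl⟩
  have hM0 : 0 ≤ M := by rw [hMdef]; exact le_max_left _ _
  have hVrM : ∀ t : ℝ, 0 ≤ t → t < T →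
      Vr (d - ri) (ro - d) (rng x y xT yT t - d) ≤ M := by
    intro t ht htT
    have hrin := hin t ht htT
    have h1 : -ro ≤ eby x y θ xT yT d t - d :=
      le_trans (neg_le_neg (le_trans (heby_le t) (le_of_lt hrin.2)))
        (neg_abs_le _)
    have hVt : V t = Vr (d - ri) (ro - d) (rng x y xT yT t - d)
        + (1 / k2) * eby x y θ xT yT d t := by rw [hVdef]
    have h2 : (1 / k2) * (d - ro) ≤ (1 / k2) * eby x y θ xT yT d t :=
      mul_le_mul_of_nonneg_left (by linarith) (by positivity)
    have h3 := hVbound t ht htT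
    have h4 : V 0 + C * T + (ro - d) / k2 ≤ M := by rw [hMdef]; exact le_max_right _ _
    have h5 : (1 / k2) * (d - ro) = -((ro - d) / k2) := by ring
    rw [h5] at h2
    linarith [hVt ▸ h3]
  -- extraction constants
  obtain ⟨u, hudef⟩ : ∃ u : ℝ, u = 1 - Real.exp (-(2 * M)) := ⟨_, rfl⟩
  have hu0 : 0 ≤ u := by
    rw [hudef]
    have : Real.exp (-(2 * M)) ≤ 1 := Real.exp_le_one_iff.mpr (by linarith)
    linarith
  have hu1 : u < 1 := by
    rw [hudef]
    have := Real.exp_pos (-(2 * M))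
    linarith
  obtain ⟨ca, hcadef⟩ : ∃ c : ℝ, c = Real.sqrt ((d - ri) ^ 2 * u) := ⟨_, rfl⟩
  obtain ⟨cb, hcbdef⟩ : ∃ c : ℝ, c = Real.sqrt ((ro - d) ^ 2 * u) := ⟨_, rfl⟩
  have hca0 : 0 ≤ ca := hcadef ▸ Real.sqrt_nonneg _
  have hcb0 : 0 ≤ cb := hcbdef ▸ Real.sqrt_nonneg _
  have hcalt : ca < d - ri := by
    rw [hcadef]
    calc Real.sqrt ((d - ri) ^ 2 * u) < Real.sqrt ((d - ri) ^ 2) :=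
          Real.sqrt_lt_sqrt (by positivity)
            (by nlinarith [mul_pos (pow_pos hδa 2) (sub_pos.mpr hu1)])
      _ = d - ri := Real.sqrt_sq (le_of_lt hδa)
  have hcblt : cb < ro - d := by
    rw [hcbdef]
    calc Real.sqrt ((ro - d) ^ 2 * u) < Real.sqrt ((ro - d) ^ 2) :=
          Real.sqrt_lt_sqrt (by positivity)
            (by nlinarith [mul_pos (pow_pos hδb 2) (sub_pos.mpr hu1)])
      _ = ro - d := Real.sqrt_sq (le_of_lt hδb)
  -- the trajectory stays in a compact subinterval
  have htrap : ∀ t : ℝ, 0 ≤ t → t < T →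
      rng x y xT yT t ∈ Set.Icc (d - ca) (d + cb) := by
    intro t ht htT
    have hrin := hin t ht htT
    have hVrle := hVrM t ht htT
    by_cases hsign : 0 < rng x y xT yT t - d
    · rw [Vr, if_pos hsign] at hVrle
      have hsq : (rng x y xT yT t - d) ^ 2 < (ro - d) ^ 2 := by
        have h1 := hrin.1
        have h2 := hrin.2
        nlinarith
      have hext := Vr_extract hδb hsq hVrle
      have hle : rng x y xT yT t - d ≤ cb := by
        rw [hcbdef]
        calc rng x y xT yT t - d ≤ |rng x y xT yT t - d| := le_abs_self _
          _ = Real.sqrt ((rng x y xT yT t - d) ^ 2) := (Real.sqrt_sq_eq_abs _).symm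
          _ ≤ Real.sqrt ((ro - d) ^ 2 * u) :=
              Real.sqrt_le_sqrt (by rw [hudef]; exact hext)
      exact ⟨by linarith, by linarith⟩
    · push_neg at hsign
      rw [Vr, if_neg (not_lt.mpr hsign)] at hVrle
      have hsq : (rng x y xT yT t - d) ^ 2 < (d - ri) ^ 2 := by
        have h1 := hrin.1
        nlinarith
      have hext := Vr_extract hδa hsq hVrle
      have hle : -(rng x y xT yT t - d) ≤ ca := by
        rw [hcadef]
        calc -(rng x y xT yT t - d) ≤ |rng x y xT yT t - d| := neg_le_abs _
          _ = Real.sqrt ((rng x y xT yT t - d) ^ 2) := (Real.sqrt_sq_eq_abs _).symm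
          _ ≤ Real.sqrt ((d - ri) ^ 2 * u) :=
              Real.sqrt_le_sqrt (by rw [hudef]; exact hext)
      exact ⟨by linarith, by linarith⟩
  -- pass to the limit at the first exit time
  have hTendsto : Filter.Tendsto (rng x y xT yT) (nhdsWithin T (Set.Iio T))
      (nhds (rng x y xT yT T)) := ((hrcont T hT0).continuousWithinAt).tendsto
  have hev : ∀ᶠ s in nhdsWithin T (Set.Iio T),
      rng x y xT yT s ∈ Set.Icc (d - ca) (d + cb) := by
    filter_upwards [Ioo_mem_nhdsLT_of_mem
      (Set.mem_Ioc.mpr ⟨hTpos, le_rfl⟩ : T ∈ Set.Ioc 0 T)] with s hs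
    exact htrap s (le_of_lt hs.1) hs.2
  have hrT : rng x y xT yT T ∈ Set.Icc (d - ca) (d + cb) :=
    isClosed_Icc.mem_of_tendsto hTendsto hev
  exact hTB.2 ⟨by linarith [hrT.1], by linarith [hrT.2]⟩
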